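/- There exists a constant C > 0, independent of y, such that for all y ∈ Γ: ‖u_A(y) − u_h(y)‖_{ℝ^N_M} ≤ C ( |ρ(y)| + λ̂(y)⁻¹ ‖r(y)‖_{ℝ^N_M} + s(y)⁻¹ ‖M⁻¹ R_A(s P_A(K v))(y)‖_{ℝ^N_M} ). -/

import Mathlib

open Matrix MeasureTheory

namespace Stmt9Aux

variable {N : ℕ}

noncomputable def eu (x : Fin N → ℝ) : EuclideanSpace ℝ (Fin N) :=
  (WithLp.equiv 2 (Fin N → ℝ)).symm x

lemma eu_inner (x y : Fin N → ℝ) : (inner ℝ (eu x) (eu y) : ℝ) = x ⬝ᵥ y := by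
  simp [eu, PiLp.inner_apply, RCLike.inner_apply, dotProduct, mul_comm]

lemma eu_norm (x : Fin N → ℝ) : ‖eu x‖ = Real.sqrt (x ⬝ᵥ x) := by
  rw [EuclideanSpace.norm_eq]
  congr 1
  simp [eu, dotProduct, sq]

lemma dot_self_nonneg (x : Fin N → ℝ) : 0 ≤ x ⬝ᵥ x :=
  Finset.sum_nonneg fun _ _ => mul_self_nonneg _

lemma sqrt_dot_sq (x : Fin N → ℝ) : Real.sqrt (x ⬝ᵥ x) ^ 2 = x ⬝ᵥ x :=
  Real.sq_sqrt (dot_self_nonneg x)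

lemma abs_dot_le (x y : Fin N → ℝ) :
    |x ⬝ᵥ y| ≤ Real.sqrt (x ⬝ᵥ x) * Real.sqrt (y ⬝ᵥ y) := by
  have := abs_real_inner_le_norm (eu x) (eu y)
  rwa [eu_inner, eu_norm, eu_norm] at this

lemma dot_le (x y : Fin N → ℝ) :
    x ⬝ᵥ y ≤ Real.sqrt (x ⬝ᵥ x) * Real.sqrt (y ⬝ᵥ y) :=
  (le_abs_self _).trans (abs_dot_le x y)

lemma enorm_add_le (x y : Fin N → ℝ) :
    Real.sqrt ((x + y) ⬝ᵥ (x + y)) ≤ Real.sqrt (x ⬝ᵥ x) + Real.sqrt (y ⬝ᵥ y) := by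
  have h : eu (x + y) = eu x + eu y := rfl
  have := norm_add_le (eu x) (eu y)
  rw [← h, eu_norm, eu_norm, eu_norm] at this
  exact this

lemma enorm_smul (t : ℝ) (x : Fin N → ℝ) :
    Real.sqrt ((t • x) ⬝ᵥ (t • x)) = |t| * Real.sqrt (x ⬝ᵥ x) := by
  have h : eu (t • x) = t • eu x := rfl
  have : ‖eu (t • x)‖ = ‖t • eu x‖ := by rw [h]
  rw [eu_norm, norm_smul, eu_norm] at this
  simpa [Real.norm_eq_abs] using this

lemma symm_dot {A : Matrix (Fin N) (Fin N) ℝ} (hA : Aᵀ = A) (a b : Fin N → ℝ) :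
    a ⬝ᵥ (A *ᵥ b) = (A *ᵥ a) ⬝ᵥ b := by
  rw [Matrix.dotProduct_mulVec, ← Matrix.mulVec_transpose, hA]

lemma hermitian_symm {A : Matrix (Fin N) (Fin N) ℝ} (hA : A.IsHermitian) : Aᵀ = A := by
  ext i j
  have := congrFun (congrFun hA i) j
  simpa [Matrix.conjTranspose_apply] using this

lemma symm_hermitian {A : Matrix (Fin N) (Fin N) ℝ} (hA : Aᵀ = A) : A.IsHermitian := by
  ext i j
  have := congrFun (congrFun hA i) j
  simpa [Matrix.conjTranspose_apply] using this

lemma rayleigh_bound {B : Matrix (Fin N) (Fin N) ℝ} (hB : B.IsHermitian)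
    {xh : Fin N → ℝ} (hxh1 : xh ⬝ᵥ xh = 1) {θh θ2 : ℝ} (hθ : θ2 < θh)
    (hBxh : B *ᵥ xh = θh • xh)
    (heig : ∀ θ (z : Fin N → ℝ), z ≠ 0 → B *ᵥ z = θ • z → z ⬝ᵥ xh = 0 → θ ≤ θ2)
    (x : Fin N → ℝ) (hx : x ⬝ᵥ xh = 0) :
    x ⬝ᵥ (B *ᵥ x) ≤ θ2 * (x ⬝ᵥ x) := by
  have hBsymm : Bᵀ = B := hermitian_symm hB
  set e := hB.eigenvectorBasis with he
  set θ := hB.eigenvalues with hθdef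
  have hmul : ∀ i, B *ᵥ ⇑(e i) = θ i • ⇑(e i) := hB.mulVec_eigenvectorBasis
  have heunz : ∀ i, (⇑(e i) : Fin N → ℝ) ≠ 0 := by
    intro i h
    have h1 : ‖e i‖ = 1 := e.orthonormal.1 i
    have h0 : e i = 0 := by
      have : eu (⇑(e i)) = e i := rfl
      rw [← this, h]; rfl
    rw [h0, norm_zero] at h1; norm_num at h1
  have key : ∀ i, x ⬝ᵥ ⇑(e i) = 0 ∨ θ i ≤ θ2 := by
    intro i
    by_cases hei : (⇑(e i) : Fin N → ℝ) ⬝ᵥ xh = 0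
    · exact Or.inr (heig (θ i) _ (heunz i) (hmul i) hei)
    · left
      have h1 : θ i * (⇑(e i) ⬝ᵥ xh) = θh * (⇑(e i) ⬝ᵥ xh) := by
        have := symm_dot hBsymm (⇑(e i)) xh
        rw [hBxh, hmul i] at this
        simpa [smul_dotProduct, dotProduct_smul] using this.symm
      have hθi : θ i = θh := by
        exact mul_right_cancel₀ hei h1
      set a := (⇑(e i) : Fin N → ℝ) ⬝ᵥ xh with ha
      set p := (⇑(e i) : Fin N → ℝ) - a • xh with hp
      have hpxh : p ⬝ᵥ xh = 0 := by
        simp [hp, sub_dotProduct, smul_dotProduct, hxh1, ha]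
      have hBp : B *ᵥ p = θh • p := by
        simp only [hp, Matrix.mulVec_sub, Matrix.mulVec_smul, hmul i, hθi, hBxh]
        module
      have hp0 : p = 0 := by
        by_contra hpne
        exact absurd (heig θh p hpne hBp hpxh) (not_le.mpr hθ)
      have hei' : (⇑(e i) : Fin N → ℝ) = a • xh := by
        rw [hp] at hp0
        exact sub_eq_zero.mp hp0
      rw [dotProduct_comm, hei']
      simp [smul_dotProduct, dotProduct_comm xh x, hx]
  have hinner1 : ∀ (z : Fin N → ℝ) i, (inner ℝ (eu z) (e i) : ℝ) = z ⬝ᵥ ⇑(e i) := by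
    intro z i; exact eu_inner z (⇑(e i))
  have hxx : x ⬝ᵥ x = ∑ i, (x ⬝ᵥ ⇑(e i))^2 := by
    have := e.sum_inner_mul_inner (eu x) (eu x)
    rw [eu_inner] at this
    rw [← this]
    congr 1; funext i
    rw [hinner1, real_inner_comm (eu x) (e i), hinner1, sq]
  have hxBx : x ⬝ᵥ (B *ᵥ x) = ∑ i, θ i * (x ⬝ᵥ ⇑(e i))^2 := by
    have := e.sum_inner_mul_inner (eu x) (eu (B *ᵥ x))
    rw [eu_inner] at this
    rw [← this]
    congr 1; funext i
    rw [hinner1, real_inner_comm (eu (B *ᵥ x)) (e i), hinner1]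
    have : (B *ᵥ x) ⬝ᵥ ⇑(e i) = θ i * (x ⬝ᵥ ⇑(e i)) := by
      rw [dotProduct_comm, symm_dot hBsymm, hmul i, dotProduct_comm]
      simp [smul_dotProduct, dotProduct_comm]
    rw [this]; ring
  rw [hxx, hxBx, Finset.mul_sum]
  apply Finset.sum_le_sum
  intro i _
  rcases key i with h | h
  · simp [h]
  · exact mul_le_mul_of_nonneg_right h (sq_nonneg _)

end Stmt9Aux


namespace Stmt9Aux

lemma a1 {t zz : ℝ} (hzz : 0 < zz) (h : 0 < t * zz) : 0 < t := by nlinarith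

lemma a2 {c A Rn : ℝ} (hc : 1/2 ≤ c) (h1 : c * A ≤ Rn) (hA : 0 ≤ A) : A ≤ 2 * Rn := by
  nlinarith

lemma a3 {Rn lam rstar : ℝ} (hlam : 0 < lam) (h1 : lam⁻¹ * Rn ≤ rstar)
    (hrstar : rstar < 1/8) (hRn : 0 ≤ Rn) : 8 * Rn ≤ lam := by
  have h2 : Rn = lam * (lam⁻¹ * Rn) := by field_simp
  nlinarith

lemma a4 {lam Q W Rn t : ℝ} (hW : 0 ≤ W) (hW2 : W^2 = Q) (hRn : 0 ≤ Rn)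
    (hlam : 0 < lam) (ht : (3/4) * lam ≤ t) (h1 : t * Q ≤ W * Rn) :
    lam * W ≤ (4/3) * Rn := by
  have hQ : 0 ≤ Q := hW2 ▸ sq_nonneg W
  rcases eq_or_lt_of_le hW with h0 | h0
  · rw [← h0]; nlinarith
  · have h3 : (3/4) * lam * Q ≤ W * Rn := le_trans (by nlinarith) h1
    nlinarith

lemma a5 {W Q ρ ρstar c : ℝ} (hW2 : W^2 = Q) (hW : 0 ≤ W) (hQval : Q = 1 - ρ - c^2)
    (hρ : |ρ| ≤ ρstar) (hρs : ρstar < 1/2) : W ≤ 2 := by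
  nlinarith [(abs_le.mp hρ).1, sq_nonneg c]

lemma a6 {W Q : ℝ} (hW2 : W^2 = Q) (hWle2 : W ≤ 2) (hW : 0 ≤ W) : Q ≤ 2 * W := by
  nlinarith

lemma a7 {c ρ Q : ℝ} (hc : 1/2 ≤ c) (hQ : 0 ≤ Q) (h1 : 1 - c^2 = ρ + Q) :
    |1 - c| ≤ |ρ| + Q := by
  rcases abs_cases (1 - c) with ⟨h2, _⟩ | ⟨h2, _⟩ <;>
    rcases abs_cases ρ with ⟨h3, _⟩ | ⟨h3, _⟩ <;> nlinarith

end Stmt9Aux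

set_option maxHeartbeats 1000000 in
theorem stmt9
    {Γ : Type*} [MeasurableSpace Γ] (ν : Measure Γ) [IsProbabilityMeasure ν]
    {ι : Type*} [Fintype ι] [DecidableEq ι]
    (Λ : ι → Γ → ℝ)
    (hΛmeas : ∀ α, Measurable (Λ α))
    (hΛbdd : ∀ α, ∃ C : ℝ, ∀ᵐ y ∂ν, |Λ α y| ≤ C)
    (hortho : ∀ α β, (∫ y, Λ α y * Λ β y ∂ν) = if α = β then 1 else 0)
    (N : ℕ)
    (M : Matrix (Fin N) (Fin N) ℝ)
    (hMsymm : Mᵀ = M)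
    (hMpos : ∀ z : Fin N → ℝ, z ≠ 0 → 0 < z ⬝ᵥ (M *ᵥ z))
    (Mnorm : (Fin N → ℝ) → ℝ)
    (hMnorm : Mnorm = fun z => Real.sqrt (z ⬝ᵥ (M *ᵥ z)))
    (K : Γ → Matrix (Fin N) (Fin N) ℝ)
    (hKmeas : ∀ i j, Measurable fun y => K y i j)
    (hKbdd : ∃ C : ℝ, ∀ y i j, |K y i j| ≤ C)
    (hKsymm : ∀ y, (K y)ᵀ = K y)
    (hKpos : ∀ y, ∀ z : Fin N → ℝ, z ≠ 0 → 0 < z ⬝ᵥ (K y *ᵥ z))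
    (μh μ2 : Γ → ℝ) (uh : Γ → Fin N → ℝ)
    (hμh_pos : ∀ y, 0 < μh y)
    (hμh_eig : ∀ y, K y *ᵥ uh y = μh y • (M *ᵥ uh y))
    (hμh_min : ∀ y (μ : ℝ) (z : Fin N → ℝ), z ≠ 0 → K y *ᵥ z = μ • (M *ᵥ z) → μh y ≤ μ)
    (hμ2_eig : ∀ y, ∃ z : Fin N → ℝ, z ≠ 0 ∧ K y *ᵥ z = μ2 y • (M *ᵥ z))
    (hμ2_min : ∀ y (μ : ℝ) (z : Fin N → ℝ), z ≠ 0 → K y *ᵥ z = μ • (M *ᵥ z) →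
      z ⬝ᵥ (M *ᵥ uh y) = 0 → μ2 y ≤ μ)
    (huh_norm : ∀ y, uh y ⬝ᵥ (M *ᵥ uh y) = 1)
    (lamhat : Γ → ℝ) (hlamhat : lamhat = fun y => (μh y)⁻¹ - (μ2 y)⁻¹)
    (lamhatstar : ℝ) (hlhs_pos : 0 < lamhatstar) (hlhs : ∀ y, lamhatstar ≤ lamhat y)
    (PA : (Γ → ℝ) → Γ → ℝ)
    (hPA : PA = fun g y => ∑ α, (∫ z, g z * Λ α z ∂ν) * Λ α y)
    (PAv : (Γ → Fin N → ℝ) → Γ → Fin N → ℝ)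
    (hPAv : PAv = fun g y i => ∑ α, (∫ z, g z i * Λ α z ∂ν) * Λ α y)
    (RA : (Γ → ℝ) → Γ → ℝ) (hRA : RA = fun g y => g y - PA g y)
    (RAv : (Γ → Fin N → ℝ) → Γ → Fin N → ℝ) (hRAv : RAv = fun g y => g y - PAv g y)
    (s : Γ → ℝ) (v : Γ → Fin N → ℝ)
    (hs_mem : ∃ c : ι → ℝ, s = fun y => ∑ α, c α * Λ α y)
    (hv_mem : ∃ c : ι → Fin N → ℝ, v = fun y i => ∑ α, c α i * Λ α y)
    (Kv : Γ → Fin N → ℝ) (hKv : Kv = fun y => K y *ᵥ v y)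
    (hfp1 : PAv (fun y => s y • PAv Kv y) = fun y => M *ᵥ v y)
    (hfp2 : PA (fun y => (s y) ^ 2 - v y ⬝ᵥ (M *ᵥ v y)) = fun _ => 0)
    (sstar : ℝ) (hsstar : 0 < sstar) (hs_lb : ∀ y, sstar ≤ s y)
    (huh_sign : ∀ y, 0 ≤ v y ⬝ᵥ (M *ᵥ uh y))
    (hdom : ∀ y, s y / 2 ≤ v y ⬝ᵥ (M *ᵥ uh y))
    (sPKv : Γ → Fin N → ℝ) (hsPKv : sPKv = fun y => s y • PAv Kv y)
    (uA : Γ → Fin N → ℝ) (huA : uA = fun y => M⁻¹ *ᵥ PAv Kv y)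
    (μA : Γ → ℝ)
    (hμA_mem : ∃ c : ι → ℝ, μA = fun y => ∑ α, c α * Λ α y)
    (hμA : PA (fun y => s y * μA y) = fun _ => 1)
    (r : Γ → Fin N → ℝ)
    (hr : r = fun y => (K y)⁻¹ *ᵥ RAv Kv y + (s y)⁻¹ • ((K y)⁻¹ *ᵥ RAv sPKv y))
    (ρf : Γ → ℝ)
    (hρf : ρf = fun y => ((s y) ^ 2)⁻¹ * RA (fun z => (s z) ^ 2 - v z ⬝ᵥ (M *ᵥ v z)) y)
    (hr_small : ∃ rstar : ℝ, rstar < 1 / 8 ∧ ∀ y, (lamhat y)⁻¹ * Mnorm (r y) ≤ rstar)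
    (hρ_small : ∃ ρstar : ℝ, ρstar < 1 / 2 ∧ ∀ y, |ρf y| ≤ ρstar)
    :
    ∃ C : ℝ, 0 < C ∧ ∀ y,
      Mnorm (uA y - uh y) ≤
        C * (|ρf y| + (lamhat y)⁻¹ * Mnorm (r y) +
          (s y)⁻¹ * Mnorm (M⁻¹ *ᵥ RAv sPKv y)) := by
  classical
  obtain ⟨rstar, hrstar, hrbd⟩ := hr_small
  obtain ⟨ρstar, hρstar, hρbd⟩ := hρ_small
  have hMnonneg : ∀ z, 0 ≤ Mnorm z := by
    intro z; rw [hMnorm]; exact Real.sqrt_nonneg _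
  have hMherm : M.IsHermitian := Stmt9Aux.symm_hermitian hMsymm
  have hMpd : M.PosDef := .of_dotProduct_mulVec_pos hMherm (fun x hx => by simpa using hMpos x hx)
  have hMps : M.PosSemidef := hMpd.posSemidef
  obtain ⟨S, hSS, hSsymm⟩ : ∃ S : Matrix (Fin N) (Fin N) ℝ, S * S = M ∧ Sᵀ = S :=
    by open scoped MatrixOrder in
      exact ⟨CFC.sqrt M, CFC.sqrt_mul_sqrt_self M hMps.nonneg,
        Stmt9Aux.hermitian_symm (CFC.sqrt_nonneg M).posSemidef.1⟩
  have hMdet : IsUnit M.det := (Ne.isUnit hMpd.det_pos.ne')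
  have hSdet : IsUnit S.det := by
    have h : S.det * S.det = M.det := by rw [← Matrix.det_mul, hSS]
    have hMd : M.det ≠ 0 := hMpd.det_pos.ne'
    have : S.det ≠ 0 := by
      intro h0
      rw [h0, mul_zero] at h
      exact hMd h.symm
    exact this.isUnit
  have hScancel : ∀ a : Fin N → ℝ, S⁻¹ *ᵥ (S *ᵥ a) = a := by
    intro a
    rw [Matrix.mulVec_mulVec, Matrix.nonsing_inv_mul _ hSdet, Matrix.one_mulVec]
  have hMcancel : ∀ a : Fin N → ℝ, M⁻¹ *ᵥ (M *ᵥ a) = a := by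
    intro a
    rw [Matrix.mulVec_mulVec, Matrix.nonsing_inv_mul _ hMdet, Matrix.one_mulVec]
  have hdotS : ∀ a b, a ⬝ᵥ (S *ᵥ b) = (S *ᵥ a) ⬝ᵥ b := Stmt9Aux.symm_dot hSsymm
  have hdotM : ∀ a b : Fin N → ℝ, a ⬝ᵥ (M *ᵥ b) = (S *ᵥ a) ⬝ᵥ (S *ᵥ b) := by
    intro a b
    rw [← hSS, ← Matrix.mulVec_mulVec, hdotS]
  have hMnorm' : ∀ z, Mnorm z = Real.sqrt ((S *ᵥ z) ⬝ᵥ (S *ᵥ z)) := by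
    intro z
    rw [hMnorm]
    dsimp only
    rw [hdotM z z]
  refine ⟨4, by norm_num, fun y => ?_⟩
  have hsy : 0 < s y := lt_of_lt_of_le hsstar (hs_lb y)
  have hsy' : s y ≠ 0 := hsy.ne'
  have hKherm : (K y).IsHermitian := Stmt9Aux.symm_hermitian (hKsymm y)
  have hKpd : (K y).PosDef := .of_dotProduct_mulVec_pos hKherm (fun x hx => by simpa using hKpos y x hx)
  have hKdet : IsUnit (K y).det := (Ne.isUnit hKpd.det_pos.ne')
  have hKcancel : ∀ a : Fin N → ℝ, (K y)⁻¹ *ᵥ (K y *ᵥ a) = a := by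
    intro a
    rw [Matrix.mulVec_mulVec, Matrix.nonsing_inv_mul _ hKdet, Matrix.one_mulVec]
  have hKcancel' : ∀ a : Fin N → ℝ, K y *ᵥ ((K y)⁻¹ *ᵥ a) = a := by
    intro a
    rw [Matrix.mulVec_mulVec, Matrix.mul_nonsing_inv _ hKdet, Matrix.one_mulVec]
  have hKipd : (K y)⁻¹.PosDef := hKpd.inv
  have hμhy : 0 < μh y := hμh_pos y
  have hμ2y : 0 < μ2 y := by
    obtain ⟨z2, hz2ne, hz2⟩ := hμ2_eig y
    exact lt_of_lt_of_le hμhy (hμh_min y _ z2 hz2ne hz2)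
  have hlamy : 0 < lamhat y := lt_of_lt_of_le hlhs_pos (hlhs y)
  have hlam_eq : lamhat y = (μh y)⁻¹ - (μ2 y)⁻¹ := by rw [hlamhat]
  have hgap : (μ2 y)⁻¹ < (μh y)⁻¹ := by
    have := hlam_eq ▸ hlamy
    linarith
  -- pointwise vector identities
  obtain ⟨PKv, hPKv⟩ : ∃ x, x = PAv Kv y := ⟨_, rfl⟩
  have hfp1y : PAv sPKv y = M *ᵥ v y := by
    rw [hsPKv]; exact congrFun hfp1 y
  have hsPKvy : sPKv y = s y • PKv := by rw [hsPKv, hPKv]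
  have hRsP : RAv sPKv y = s y • PKv - M *ᵥ v y := by
    rw [hRAv]; dsimp only; rw [hsPKvy, hfp1y]
  have hRKv : RAv Kv y = K y *ᵥ v y - PKv := by
    rw [hRAv]
    dsimp only
    rw [hPKv]
    simp only [hKv]
  have hMv : M *ᵥ v y = s y • PKv - RAv sPKv y := by
    rw [hRsP]; module
  have hKr : K y *ᵥ r y = (K y *ᵥ v y - PKv) + (s y)⁻¹ • RAv sPKv y := by
    rw [hr]; dsimp only
    rw [Matrix.mulVec_add, Matrix.mulVec_smul, hKcancel', hKcancel', hRKv]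
  obtain ⟨w, hwdef⟩ : ∃ x, x = (s y)⁻¹ • v y := ⟨_, rfl⟩
  have hsw : s y • w = v y := by
    rw [hwdef, smul_smul, mul_inv_cancel₀ hsy', one_smul]
  have hMw : M *ᵥ w = K y *ᵥ (s y • w - r y) := by
    rw [Matrix.mulVec_sub, hsw, hKr, hwdef, Matrix.mulVec_smul, hMv]
    rw [smul_sub]
    rw [smul_smul, inv_mul_cancel₀ hsy', one_smul]
    module
  -- Euclidean side
  obtain ⟨B, hBdef⟩ : ∃ x, x = S * (K y)⁻¹ * S := ⟨_, rfl⟩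
  have hBsymm : Bᵀ = B := by
    rw [hBdef, Matrix.transpose_mul, Matrix.transpose_mul, Matrix.transpose_nonsing_inv,
      hKsymm y, hSsymm, Matrix.mul_assoc]
  have hSmv : ∀ a : Fin N → ℝ, B *ᵥ (S *ᵥ a) = S *ᵥ ((K y)⁻¹ *ᵥ (M *ᵥ a)) := by
    intro a
    simp only [hBdef, Matrix.mulVec_mulVec, ← hSS, Matrix.mul_assoc]
  obtain ⟨what, hwhat⟩ : ∃ x, x = S *ᵥ w := ⟨_, rfl⟩
  obtain ⟨xh, hxh⟩ : ∃ x, x = S *ᵥ uh y := ⟨_, rfl⟩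
  obtain ⟨rh, hrh⟩ : ∃ x, x = S *ᵥ r y := ⟨_, rfl⟩
  have hBw : B *ᵥ what = s y • what - rh := by
    rw [hwhat, hrh, hSmv, hMw, hKcancel, Matrix.mulVec_sub, Matrix.mulVec_smul]
  have hKinvMuh : (K y)⁻¹ *ᵥ (M *ᵥ uh y) = (μh y)⁻¹ • uh y := by
    have h1 := congrArg (fun t => (K y)⁻¹ *ᵥ t) (hμh_eig y)
    rw [hKcancel, Matrix.mulVec_smul] at h1
    calc (K y)⁻¹ *ᵥ (M *ᵥ uh y)
        = (μh y)⁻¹ • (μh y • ((K y)⁻¹ *ᵥ (M *ᵥ uh y))) := by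
          rw [smul_smul, inv_mul_cancel₀ hμhy.ne', one_smul]
      _ = (μh y)⁻¹ • uh y := by rw [← h1]
  have hBxh : B *ᵥ xh = (μh y)⁻¹ • xh := by
    rw [hxh, hSmv, hKinvMuh, Matrix.mulVec_smul]
  -- eigenvalue hypothesis for the Rayleigh bound
  have heig : ∀ θ (z : Fin N → ℝ), z ≠ 0 → B *ᵥ z = θ • z → z ⬝ᵥ xh = 0 →
      θ ≤ (μ2 y)⁻¹ := by
    intro θ z hz hBz hzxh
    obtain ⟨u, hu⟩ : ∃ x, x = S⁻¹ *ᵥ z := ⟨_, rfl⟩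
    have hSu : S *ᵥ u = z := by
      rw [hu, Matrix.mulVec_mulVec, Matrix.mul_nonsing_inv _ hSdet, Matrix.one_mulVec]
    have hune : u ≠ 0 := by
      intro h0
      exact hz (by rw [← hSu, h0, Matrix.mulVec_zero])
    have hKin : (K y)⁻¹ *ᵥ (M *ᵥ u) = θ • u := by
      have h1 := hBz
      rw [← hSu, hSmv] at h1
      have h2 : θ • (S *ᵥ u) = S *ᵥ (θ • u) := (Matrix.mulVec_smul _ _ _).symm
      rw [h2] at h1
      have h3 := congrArg (fun t => S⁻¹ *ᵥ t) h1
      rwa [hScancel, hScancel] at h3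
    have hθpos : 0 < θ := by
      have hzz : 0 < z ⬝ᵥ z := by
        have h0 : z ⬝ᵥ z ≠ 0 := fun h => hz (dotProduct_self_eq_zero.mp h)
        exact lt_of_le_of_ne (Stmt9Aux.dot_self_nonneg z) (Ne.symm h0)
      have hSz : S *ᵥ z ≠ 0 := by
        intro h0
        apply hz
        rw [← hScancel z, h0, Matrix.mulVec_zero]
      have hBz' : 0 < z ⬝ᵥ (B *ᵥ z) := by
        have h4 : z ⬝ᵥ (B *ᵥ z) = (S *ᵥ z) ⬝ᵥ ((K y)⁻¹ *ᵥ (S *ᵥ z)) := by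
          rw [hBdef, Matrix.mul_assoc, ← Matrix.mulVec_mulVec, hdotS,
            ← Matrix.mulVec_mulVec]
        rw [h4]
        simpa using hKipd.dotProduct_mulVec_pos hSz
      rw [hBz] at hBz'
      have h5 : z ⬝ᵥ (θ • z) = θ * (z ⬝ᵥ z) := by
        rw [dotProduct_smul, smul_eq_mul]
      rw [h5] at hBz'
      exact Stmt9Aux.a1 hzz hBz'
    have hKu : K y *ᵥ u = θ⁻¹ • (M *ᵥ u) := by
      have h1 := congrArg (fun t => K y *ᵥ t) hKin
      rw [hKcancel', Matrix.mulVec_smul] at h1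
      rw [h1, smul_smul, inv_mul_cancel₀ hθpos.ne', one_smul]
    have hperp : u ⬝ᵥ (M *ᵥ uh y) = 0 := by
      rw [hdotM, hSu, ← hxh]
      exact hzxh
    have h2 := hμ2_min y θ⁻¹ u hune hKu hperp
    calc θ = (θ⁻¹)⁻¹ := (inv_inv θ).symm
      _ ≤ (μ2 y)⁻¹ := inv_anti₀ hμ2y h2
  -- scalar quantities
  obtain ⟨c, hcdef⟩ : ∃ x, x = what ⬝ᵥ xh := ⟨_, rfl⟩
  have hcval : c = (s y)⁻¹ * (v y ⬝ᵥ (M *ᵥ uh y)) := by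
    rw [hcdef, hwhat, hxh, ← hdotM, hwdef, smul_dotProduct, smul_eq_mul]
  have hc : 1/2 ≤ c := by
    rw [hcval]
    have h1 := hdom y
    have h2 : (s y)⁻¹ * (s y / 2) ≤ (s y)⁻¹ * (v y ⬝ᵥ (M *ᵥ uh y)) :=
      mul_le_mul_of_nonneg_left h1 (inv_nonneg.mpr hsy.le)
    have h3 : (s y)⁻¹ * (s y / 2) = 1/2 := by field_simp
    linarith
  have hxhxh : xh ⬝ᵥ xh = 1 := by
    rw [hxh, ← hdotM]
    exact huh_norm y
  have hfp2y : PA (fun z => (s z) ^ 2 - v z ⬝ᵥ (M *ᵥ v z)) y = 0 := congrFun hfp2 y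
  have hρval : ρf y = ((s y)^2)⁻¹ * ((s y)^2 - v y ⬝ᵥ (M *ᵥ v y)) := by
    rw [hρf]; dsimp only
    rw [hRA]; dsimp only
    rw [hfp2y, sub_zero]
  have hvMv : v y ⬝ᵥ (M *ᵥ v y) = (s y)^2 * (1 - ρf y) := by
    rw [hρval]
    field_simp
    ring
  have hww : what ⬝ᵥ what = 1 - ρf y := by
    rw [hwhat, ← hdotM, hwdef, smul_dotProduct, Matrix.mulVec_smul,
      dotProduct_smul, hvMv]
    field_simp
    have h2 : (s y)⁻¹ ^ 2 * s y ^ 2 = 1 := by rw [← mul_pow, inv_mul_cancel₀ hsy', one_pow]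
    linear_combination (1 - ρf y) * h2
  -- orthogonal part
  obtain ⟨wp, hwpdef⟩ : ∃ x, x = what - c • xh := ⟨_, rfl⟩
  have hwpxh : wp ⬝ᵥ xh = 0 := by
    rw [hwpdef, sub_dotProduct, smul_dotProduct, hxhxh]
    rw [← hcdef]; simp
  obtain ⟨Q, hQdef⟩ : ∃ x, x = wp ⬝ᵥ wp := ⟨_, rfl⟩
  have hQnonneg : 0 ≤ Q := by rw [hQdef]; exact Stmt9Aux.dot_self_nonneg wp
  obtain ⟨W, hWdef⟩ : ∃ x, x = Real.sqrt Q := ⟨_, rfl⟩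
  have hWnonneg : 0 ≤ W := by rw [hWdef]; exact Real.sqrt_nonneg _
  have hW2 : W^2 = Q := by rw [hWdef]; exact Real.sq_sqrt hQnonneg
  obtain ⟨Rn, hRndef⟩ : ∃ x, x = Mnorm (r y) := ⟨_, rfl⟩
  have hRn_eq : Rn = Real.sqrt (rh ⬝ᵥ rh) := by rw [hRndef, hMnorm', hrh]
  have hRnonneg : 0 ≤ Rn := by rw [hRndef]; exact hMnonneg _
  have hQval : Q = 1 - ρf y - c^2 := by
    rw [hQdef, hwpdef]
    simp only [sub_dotProduct, dotProduct_sub, smul_dotProduct,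
      dotProduct_smul, hxhxh, hww]
    rw [dotProduct_comm xh what, ← hcdef]
    simp only [smul_eq_mul]
    ring
  have hwpw : wp ⬝ᵥ what = Q := by
    have h1 : what = wp + c • xh := by rw [hwpdef]; module
    rw [hQdef]
    nth_rewrite 1 [h1]
    rw [dotProduct_add, dotProduct_smul, hwpxh]
    simp
  have hwpBwp : wp ⬝ᵥ (B *ᵥ wp) = s y * Q - wp ⬝ᵥ rh := by
    have hBwp : B *ᵥ wp = (s y • what - rh) - c • ((μh y)⁻¹ • xh) := by
      rw [hwpdef, Matrix.mulVec_sub, Matrix.mulVec_smul, hBw, hBxh]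
    rw [hBwp]
    simp only [dotProduct_sub, dotProduct_smul, smul_eq_mul, hwpxh, hwpw]
    ring
  have hray : wp ⬝ᵥ (B *ᵥ wp) ≤ (μ2 y)⁻¹ * Q := by
    rw [hQdef]
    exact Stmt9Aux.rayleigh_bound (Stmt9Aux.symm_hermitian hBsymm) hxhxh hgap hBxh heig wp hwpxh
  -- bound on s - μh⁻¹
  have hsθ : c * (s y - (μh y)⁻¹) = xh ⬝ᵥ rh := by
    have h1 : xh ⬝ᵥ (B *ᵥ what) = (μh y)⁻¹ * c := by
      rw [Stmt9Aux.symm_dot hBsymm, hBxh, smul_dotProduct, smul_eq_mul,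
        dotProduct_comm xh what, ← hcdef]
    have h2 : xh ⬝ᵥ (B *ᵥ what) = s y * c - xh ⬝ᵥ rh := by
      rw [hBw, dotProduct_sub, dotProduct_smul, smul_eq_mul,
        dotProduct_comm xh what, ← hcdef]
    rw [h1] at h2
    linarith [h2]
  have habs : |s y - (μh y)⁻¹| ≤ 2 * Rn := by
    have h1 : |xh ⬝ᵥ rh| ≤ Real.sqrt (xh ⬝ᵥ xh) * Real.sqrt (rh ⬝ᵥ rh) :=
      Stmt9Aux.abs_dot_le xh rh
    rw [hxhxh, Real.sqrt_one, one_mul, ← hRn_eq] at h1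
    have h2 : |c * (s y - (μh y)⁻¹)| = c * |s y - (μh y)⁻¹| := by
      rw [abs_mul, abs_of_nonneg (by linarith : (0:ℝ) ≤ c)]
    rw [hsθ] at h2
    rw [h2] at h1
    exact Stmt9Aux.a2 hc h1 (abs_nonneg _)
  have hR8 : 8 * Rn ≤ lamhat y := by
    have h1 : (lamhat y)⁻¹ * Rn ≤ rstar := by rw [hRndef]; exact hrbd y
    exact Stmt9Aux.a3 hlamy h1 hrstar hRnonneg
  have hsθ2 : (3/4) * lamhat y ≤ s y - (μ2 y)⁻¹ := by
    have h1 := abs_le.mp habs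
    have h2 : s y - (μ2 y)⁻¹ = (s y - (μh y)⁻¹) + lamhat y := by
      rw [hlam_eq]; ring
    linarith [h1.1]
  -- bound on wp
  have hWbd : lamhat y * W ≤ (4/3) * Rn := by
    have h1 : (s y - (μ2 y)⁻¹) * Q ≤ wp ⬝ᵥ rh := by
      rw [sub_mul]; linarith [hwpBwp, hray]
    have h2 : wp ⬝ᵥ rh ≤ W * Rn := by
      rw [hWdef, hQdef, hRn_eq]
      exact Stmt9Aux.dot_le wp rh
    exact Stmt9Aux.a4 hWnonneg hW2 hRnonneg hlamy hsθ2 (le_trans h1 h2)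
  have hρsmall : |ρf y| ≤ ρstar := hρbd y
  have hWle2 : W ≤ 2 := Stmt9Aux.a5 hW2 hWnonneg hQval hρsmall hρstar
  have hQle2W : Q ≤ 2 * W := Stmt9Aux.a6 hW2 hWle2 hWnonneg
  have hc1 : |1 - c| ≤ |ρf y| + Q :=
    Stmt9Aux.a7 hc hQnonneg (by rw [hQval]; ring)
  -- final assembly
  have huAy : uA y = w + (s y)⁻¹ • (M⁻¹ *ᵥ RAv sPKv y) := by
    rw [huA]; dsimp only
    have hPKveq : PAv Kv y = (s y)⁻¹ • (M *ᵥ v y + RAv sPKv y) := by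
      rw [hRsP]
      rw [show M *ᵥ v y + (s y • PKv - M *ᵥ v y) = s y • PKv by module]
      rw [smul_smul, inv_mul_cancel₀ hsy', one_smul, hPKv]
    rw [hPKveq, Matrix.mulVec_smul, Matrix.mulVec_add, hMcancel, hwdef]
    module
  have hSdiff : S *ᵥ (uA y - uh y) =
      wp + ((c - 1) • xh + (s y)⁻¹ • (S *ᵥ (M⁻¹ *ᵥ RAv sPKv y))) := by
    rw [huAy, hwpdef, hwhat, hxh]
    rw [Matrix.mulVec_sub, Matrix.mulVec_add, Matrix.mulVec_smul]
    module
  have hT3 : Real.sqrt ((S *ᵥ (M⁻¹ *ᵥ RAv sPKv y)) ⬝ᵥ (S *ᵥ (M⁻¹ *ᵥ RAv sPKv y)))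
      = Mnorm (M⁻¹ *ᵥ RAv sPKv y) := (hMnorm' _).symm
  have hmain : Mnorm (uA y - uh y) ≤ W + (|c - 1| + (s y)⁻¹ * Mnorm (M⁻¹ *ᵥ RAv sPKv y)) := by
    rw [hMnorm', hSdiff]
    calc Real.sqrt ((wp + ((c - 1) • xh + (s y)⁻¹ • (S *ᵥ (M⁻¹ *ᵥ RAv sPKv y)))) ⬝ᵥ
          (wp + ((c - 1) • xh + (s y)⁻¹ • (S *ᵥ (M⁻¹ *ᵥ RAv sPKv y)))))
        ≤ Real.sqrt (wp ⬝ᵥ wp) +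
          Real.sqrt (((c - 1) • xh + (s y)⁻¹ • (S *ᵥ (M⁻¹ *ᵥ RAv sPKv y))) ⬝ᵥ
            (((c - 1) • xh + (s y)⁻¹ • (S *ᵥ (M⁻¹ *ᵥ RAv sPKv y))))) :=
          Stmt9Aux.enorm_add_le _ _
      _ ≤ Real.sqrt (wp ⬝ᵥ wp) + (Real.sqrt (((c - 1) • xh) ⬝ᵥ ((c - 1) • xh)) +
          Real.sqrt (((s y)⁻¹ • (S *ᵥ (M⁻¹ *ᵥ RAv sPKv y))) ⬝ᵥ
            ((s y)⁻¹ • (S *ᵥ (M⁻¹ *ᵥ RAv sPKv y))))) := by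
          gcongr
          exact Stmt9Aux.enorm_add_le _ _
      _ = W + (|c - 1| * 1 + (s y)⁻¹ * Mnorm (M⁻¹ *ᵥ RAv sPKv y)) := by
          rw [Stmt9Aux.enorm_smul, Stmt9Aux.enorm_smul, hxhxh, Real.sqrt_one, hT3,
            abs_of_nonneg (inv_nonneg.mpr hsy.le), ← hQdef, ← hWdef]
      _ = W + (|c - 1| + (s y)⁻¹ * Mnorm (M⁻¹ *ᵥ RAv sPKv y)) := by ring
  -- combine
  have hWfin : W ≤ (4/3) * ((lamhat y)⁻¹ * Rn) := by
    have h1 : W = (lamhat y)⁻¹ * (lamhat y * W) := by field_simp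
    rw [h1]
    have h2 := inv_nonneg.mpr hlamy.le
    calc (lamhat y)⁻¹ * (lamhat y * W) ≤ (lamhat y)⁻¹ * ((4/3) * Rn) :=
          mul_le_mul_of_nonneg_left hWbd h2
      _ = (4/3) * ((lamhat y)⁻¹ * Rn) := by ring
  have hc1' : |c - 1| ≤ |ρf y| + (8/3) * ((lamhat y)⁻¹ * Rn) := by
    rw [abs_sub_comm]
    have h1 : Q ≤ 2 * ((4/3) * ((lamhat y)⁻¹ * Rn)) := le_trans hQle2W (by linarith)
    linarith [hc1]
  have hT3nonneg : 0 ≤ (s y)⁻¹ * Mnorm (M⁻¹ *ᵥ RAv sPKv y) :=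
    mul_nonneg (inv_nonneg.mpr hsy.le) (hMnonneg _)
  have hGnonneg : 0 ≤ (lamhat y)⁻¹ * Rn :=
    mul_nonneg (inv_nonneg.mpr hlamy.le) hRnonneg
  rw [show Mnorm (r y) = Rn from hRndef.symm]
  calc Mnorm (uA y - uh y)
      ≤ W + (|c - 1| + (s y)⁻¹ * Mnorm (M⁻¹ *ᵥ RAv sPKv y)) := hmain
    _ ≤ (4/3) * ((lamhat y)⁻¹ * Rn) + ((|ρf y| + (8/3) * ((lamhat y)⁻¹ * Rn)) +
        (s y)⁻¹ * Mnorm (M⁻¹ *ᵥ RAv sPKv y)) := by linarith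
    _ ≤ 4 * (|ρf y| + (lamhat y)⁻¹ * Rn + (s y)⁻¹ * Mnorm (M⁻¹ *ᵥ RAv sPKv y)) := by
        have := abs_nonneg (ρf y)
        linarith
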